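/- Let a > 0 and u(x,t) = exp(a*x + a^2*t). Set A = sup over Q = [1,3] × [1,2] of u, so A = exp(3a + 2a^2). Then u_{xx}(2,2)/u(2,2) = a^2 and log(A/u(2,2)) = a; hence u_{xx}(2,2)/u(2,2) = (log(A/u(2,2)))^2. -/
import Mathlib

lemma aux_deriv (a c : ℝ) : deriv (fun y : ℝ => Real.exp (a * y + c)) = fun y => a * Real.exp (a * y + c) := by
  funext y
  have h : HasDerivAt (fun y : ℝ => Real.exp (a * y + c)) (Real.exp (a * y + c) * a) y := by
    have h1 : HasDerivAt (fun y : ℝ => a * y + c) a y := by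
      simpa using ((hasDerivAt_id y).const_mul a).add_const c
    exact (Real.hasDerivAt_exp _).comp y h1
  rw [h.deriv]; ring

/-- For `u(x,t) = exp(a x + a² t)`, `a > 0`, with `A = sup_{[1,3]×[1,2]} u = exp(3a + 2a²)`,
one has `u_{xx}(2,2)/u(2,2) = a²` and `log(A/u(2,2)) = a`, hence
`u_{xx}(2,2)/u(2,2) = (log(A/u(2,2)))²`. -/
theorem stmt_1 (a : ℝ) (ha : 0 < a)
    (u : ℝ → ℝ → ℝ) (hu : ∀ x t, u x t = Real.exp (a * x + a ^ 2 * t))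
    (A : ℝ)
    (hA : A = sSup ((fun p : ℝ × ℝ => u p.1 p.2) '' (Set.Icc 1 3 ×ˢ Set.Icc 1 2))) :
    A = Real.exp (3 * a + 2 * a ^ 2) ∧
    deriv (deriv (fun y => u y 2)) 2 / u 2 2 = a ^ 2 ∧
    Real.log (A / u 2 2) = a ∧
    deriv (deriv (fun y => u y 2)) 2 / u 2 2 = (Real.log (A / u 2 2)) ^ 2 := by
  have ha2 : (0:ℝ) ≤ a ^ 2 := sq_nonneg a
  have hAval : A = Real.exp (3 * a + 2 * a ^ 2) := by
    rw [hA]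
    apply IsGreatest.csSup_eq
    constructor
    · refine ⟨(3, 2), ?_, ?_⟩
      · constructor <;> constructor <;> norm_num
      · simp [hu]; ring_nf
    · rintro y ⟨⟨x, t⟩, ⟨⟨hx1, hx3⟩, ⟨ht1, ht2⟩⟩, rfl⟩
      simp only [hu]
      apply Real.exp_le_exp.2
      have : a * x ≤ a * 3 := mul_le_mul_of_nonneg_left hx3 ha.le
      have h2 : a ^ 2 * t ≤ a ^ 2 * 2 := mul_le_mul_of_nonneg_left ht2 ha2
      linarith
  have hfun : (fun y => u y 2) = fun y : ℝ => Real.exp (a * y + a ^ 2 * 2) := by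
    funext y; exact hu y 2
  have hdiff : Differentiable ℝ (fun y : ℝ => Real.exp (a * y + a ^ 2 * 2)) :=
    ((differentiable_id.const_mul a).add_const _).exp
  have hd2 : deriv (deriv (fun y => u y 2)) 2 = a ^ 2 * Real.exp (a * 2 + a ^ 2 * 2) := by
    rw [hfun, aux_deriv]
    rw [deriv_const_mul _ (hdiff 2), aux_deriv]
    ring
  have hu22 : u 2 2 = Real.exp (a * 2 + a ^ 2 * 2) := hu 2 2
  have hne : Real.exp (a * 2 + a ^ 2 * 2) ≠ 0 := Real.exp_ne_zero _
  have h1 : deriv (deriv (fun y => u y 2)) 2 / u 2 2 = a ^ 2 := by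
    rw [hd2, hu22, mul_div_assoc, div_self hne, mul_one]
  have h2 : Real.log (A / u 2 2) = a := by
    rw [hAval, hu22, ← Real.exp_sub, Real.log_exp]; ring
  exact ⟨hAval, h1, h2, by rw [h1, h2]⟩
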